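/- For every n ∈ ℕ, the diagonal polynomial P_n has exactly N(n) zeros in the open interval (0,∞), all of them simple, where N(n) = 2n/3 if n ≡ 0 (mod 3), N(n) = 2(n−1)/3 if n ≡ 1 (mod 3), and N(n) = 2(n−2)/3 + 1 if n ≡ 2 (mod 3). Moreover, x = 0 is not a zero of P_n when n ≡ 0 (mod 3), is a zero of multiplicity exactly 2 when n ≡ 1 (mod 3), and is a zero of multiplicity exactly 1 when n ≡ 2 (mod 3). -/

import Mathlib

/-- The primitive third root of unity `ω = exp(2πi/3)`. -/
noncomputable def ω : ℂ := Complex.exp (2 * Real.pi * Complex.I / 3)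

/-- The diagonal multiple orthogonal polynomial
`P n x = (−1)ⁿ 3⁻ⁿ e^{x³} (d/dx)ⁿ e^{−x³}` (that is, `P_{n,n}` for the
exponential cubic weight). -/
noncomputable def P (n : ℕ) : ℂ → ℂ := fun x =>
  (-1) ^ n / 3 ^ n * Complex.exp (x ^ 3) *
    iteratedDeriv n (fun z => Complex.exp (-z ^ 3)) x

/-- The number of strictly positive real zeros of `Pₙ`. -/
def N (n : ℕ) : ℕ :=
  if n % 3 = 0 then 2 * n / 3
  else if n % 3 = 1 then 2 * (n - 1) / 3
  else 2 * (n - 2) / 3 + 1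

open Polynomial Set Filter Topology

noncomputable def Qr : ℕ → Polynomial ℝ
  | 0 => 1
  | n+1 => X^2 * Qr n - Polynomial.C (1/3 : ℝ) * (Qr n).derivative

noncomputable def Qc (n : ℕ) : Polynomial ℂ := (Qr n).map (algebraMap ℝ ℂ)

lemma Qc_succ (n : ℕ) : Qc (n+1) = X^2 * Qc n - C (1/3:ℂ) * (Qc n).derivative := by
  simp [Qc, Qr, Polynomial.derivative_map, Polynomial.map_sub,
    Polynomial.map_mul, Polynomial.map_pow]

lemma hasDerivAt_aux (p : Polynomial ℂ) (x : ℂ) :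
    HasDerivAt (fun z => Complex.exp (-z^3) * p.eval z)
      (Complex.exp (-x^3) * ((-3*x^2) * p.eval x + p.derivative.eval x)) x := by
  have h1 : HasDerivAt (fun z : ℂ => Complex.exp (-z^3)) (Complex.exp (-x^3) * (-3*x^2)) x := by
    have h0 : HasDerivAt (fun z : ℂ => -z^3) (-3*x^2) x := by
      simpa using ((hasDerivAt_pow 3 x).fun_neg)
    simpa [mul_comm] using h0.cexp
  have h2 : HasDerivAt (fun z : ℂ => p.eval z) (p.derivative.eval x) x := p.hasDerivAt x
  have := h1.fun_mul h2
  refine this.congr_deriv ?_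
  ring

lemma iteratedDeriv_exp_cube (n : ℕ) (x : ℂ) :
    iteratedDeriv n (fun z => Complex.exp (-z^3)) x
      = (-3)^n * Complex.exp (-x^3) * (Qc n).eval x := by
  induction n generalizing x with
  | zero => simp [Qc, Qr]
  | succ n ih =>
    rw [iteratedDeriv_succ]
    have h : deriv (iteratedDeriv n fun z => Complex.exp (-z^3)) x
        = deriv (fun z => (-3:ℂ)^n * (Complex.exp (-z^3) * (Qc n).eval z)) x := by
      apply Filter.EventuallyEq.deriv_eq
      filter_upwards with y
      rw [ih y]; ring
    rw [h, deriv_const_mul _ (hasDerivAt_aux (Qc n) x).differentiableAt,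
      (hasDerivAt_aux (Qc n) x).deriv, Qc_succ]
    simp only [eval_sub, eval_mul, eval_pow, eval_X, eval_C]
    ring

lemma P_eq_eval (n : ℕ) (x : ℂ) : P n x = (Qc n).eval x := by
  show (-1) ^ n / 3 ^ n * Complex.exp (x ^ 3) *
    iteratedDeriv n (fun z => Complex.exp (-z ^ 3)) x = _
  rw [iteratedDeriv_exp_cube]
  have h1 : (-1:ℂ)^n * (-3)^n = 3^n := by rw [← mul_pow]; norm_num
  have h2 : Complex.exp (x^3) * Complex.exp (-x^3) = 1 := by
    rw [← Complex.exp_add]; simp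
  calc (-1:ℂ)^n / 3^n * Complex.exp (x^3) * ((-3)^n * Complex.exp (-x^3) * (Qc n).eval x)
      = ((-1:ℂ)^n * (-3)^n) / 3^n * (Complex.exp (x^3) * Complex.exp (-x^3)) * (Qc n).eval x := by
        ring
    _ = (Qc n).eval x := by
        rw [h1, h2, div_self (pow_ne_zero _ (by norm_num : (3:ℂ) ≠ 0))]; ring

lemma eq_prod_of_roots {k : ℕ} (p : Polynomial ℝ) (hm : p.Monic) (hdeg : p.natDegree = k)
    (c : Fin k → ℝ) (hinj : Function.Injective c) (hr : ∀ i, p.IsRoot (c i)) :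
    p = ∏ i, (X - C (c i)) := by
  classical
  have hp0 : p ≠ 0 := hm.ne_zero
  have hnodup : (Finset.univ.val.map c).Nodup := Finset.univ.nodup.map hinj
  have hle : (Finset.univ.val.map c) ≤ p.roots := by
    rw [Multiset.le_iff_count]
    intro a
    by_cases ha : a ∈ Finset.univ.val.map c
    · obtain ⟨i, _, rfl⟩ := Multiset.mem_map.mp ha
      calc (Finset.univ.val.map c).count (c i) ≤ 1 :=
            (Multiset.nodup_iff_count_le_one.mp hnodup) _
        _ ≤ p.roots.count (c i) := by
            rw [count_roots]
            exact (rootMultiplicity_pos hp0).mpr (hr i)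
    · rw [Multiset.count_eq_zero_of_notMem ha]; exact Nat.zero_le _
  have hdvd : (∏ i, (X - C (c i))) ∣ p := by
    have := (Multiset.prod_X_sub_C_dvd_iff_le_roots hp0 (Finset.univ.val.map c)).mpr hle
    rw [Multiset.map_map] at this
    exact this
  have hmq : (∏ i, (X - C (c i))).Monic :=
    monic_prod_of_monic _ _ (fun i _ => monic_X_sub_C (c i))
  have hdq : (∏ i, (X - C (c i))).natDegree = k := by
    rw [natDegree_prod_of_monic _ _ (fun i _ => monic_X_sub_C (c i))]
    simp
  exact (eq_of_dvd_of_natDegree_le_of_leadingCoeff hdvd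
    (by rw [hdeg, hdq]) (by rw [hm.leadingCoeff, hmq.leadingCoeff])).symm

lemma rootMultiplicity_prod {ι : Type*} (s : Finset ι) (f : ι → Polynomial ℂ)
    (hf : ∀ i ∈ s, f i ≠ 0) (x : ℂ) :
    rootMultiplicity x (∏ i ∈ s, f i) = ∑ i ∈ s, rootMultiplicity x (f i) := by
  classical
  induction s using Finset.induction with
  | empty => simp [rootMultiplicity_eq_zero (by simp [IsRoot] : ¬ (1:Polynomial ℂ).IsRoot x)]
  | insert _ _ hni ih =>
    rename_i a s
    rw [Finset.prod_insert hni, Finset.sum_insert hni,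
      Polynomial.rootMultiplicity_mul, ih (fun i hi => hf i (Finset.mem_insert_of_mem hi))]
    exact mul_ne_zero (hf a (Finset.mem_insert_self a s))
      (Finset.prod_ne_zero_iff.mpr (fun i hi => hf i (Finset.mem_insert_of_mem hi)))

lemma hasDerivAt_F (p : Polynomial ℝ) (c x : ℝ) (hx : 0 < x) :
    HasDerivAt (fun y => y ^ c * Real.exp (-y) * p.eval y)
      (-(x ^ (c-1) * Real.exp (-x) *
        ((X * p - C c * p - X * (derivative p)).eval x))) x := by
  have h1 : HasDerivAt (fun y : ℝ => y ^ c) (c * x ^ (c-1)) x :=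
    Real.hasDerivAt_rpow_const (Or.inl hx.ne')
  have h2 : HasDerivAt (fun y : ℝ => Real.exp (-y)) (-Real.exp (-x)) x := by
    simpa using ((hasDerivAt_id x).neg).exp
  have h3 : HasDerivAt (fun y : ℝ => p.eval y) (p.derivative.eval x) x := p.hasDerivAt x
  have h := (h1.fun_mul h2).fun_mul h3
  refine h.congr_deriv ?_
  have hc : x ^ c = x ^ (c-1) * x := by
    rw [← Real.rpow_add_one hx.ne' (c-1), sub_add_cancel]
  simp only [eval_sub, eval_mul, eval_X, eval_C]
  rw [hc]; ring

lemma tendsto_F (p : Polynomial ℝ) (c : ℝ) :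
    Tendsto (fun x => x ^ c * Real.exp (-x) * p.eval x) atTop (𝓝 0) := by
  have key : Tendsto (fun x => ∑ i ∈ Finset.range (p.natDegree + 1),
      p.coeff i * (x ^ (c + i) * Real.exp (-x))) atTop (𝓝 0) := by
    have h0 : (0:ℝ) = ∑ i ∈ Finset.range (p.natDegree + 1), p.coeff i * 0 := by simp
    rw [h0]
    apply tendsto_finset_sum
    intro i _
    apply Tendsto.const_mul
    simpa using tendsto_rpow_mul_exp_neg_mul_atTop_nhds_zero (c + i) 1 one_pos
  apply key.congr'
  filter_upwards [eventually_gt_atTop (0:ℝ)] with x hx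
  rw [Polynomial.eval_eq_sum_range, Finset.mul_sum]
  apply Finset.sum_congr rfl
  intro i _
  rw [Real.rpow_add hx, Real.rpow_natCast]
  ring

lemma exists_deriv_zero_Ioi (f f' : ℝ → ℝ) (a x₀ : ℝ) (hax : a < x₀)
    (hcont : ContinuousOn f (Ici a)) (hder : ∀ x, a < x → HasDerivAt f (f' x) x)
    (hfa : f a = 0) (hpos : 0 < f x₀) (hlim : Tendsto f atTop (𝓝 0)) :
    ∃ c, a < c ∧ f' c = 0 := by
  obtain ⟨M, hM⟩ := (hlim.eventually (eventually_abs_sub_lt 0 hpos)).exists_forall_of_atTop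
  set M' := max M (x₀ + 1) with hM'
  have hx₀M : x₀ < M' := lt_of_lt_of_le (lt_add_one x₀) (le_max_right _ _)
  have haM : a < M' := hax.trans hx₀M
  obtain ⟨z, hzmem, hz⟩ := (isCompact_Icc (a := a) (b := M')).exists_isMaxOn
    (nonempty_Icc.mpr haM.le) (hcont.mono (Icc_subset_Ici_self))
  have hfz : f x₀ ≤ f z := hz ⟨hax.le, hx₀M.le⟩
  have hza : a < z := by
    rcases lt_or_eq_of_le hzmem.1 with h | h
    · exact h
    · exfalso; rw [← h, hfa] at hfz; exact absurd hfz (not_le.mpr hpos)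
  have hzM : z < M' := by
    rcases lt_or_eq_of_le hzmem.2 with h | h
    · exact h
    · exfalso
      have := hM M' (le_max_left _ _)
      rw [sub_zero] at this
      rw [h] at hfz
      exact absurd (lt_of_le_of_lt hfz (lt_of_le_of_lt (le_abs_self _) this)) (lt_irrefl _)
  have hloc : IsLocalMax f z := hz.isLocalMax (Icc_mem_nhds hza hzM)
  exact ⟨z, hza, hloc.hasDerivAt_eq_zero (hder z hza)⟩
lemma chain (m : ℕ) (v : Fin (m+1) → ℝ) (hv : StrictMono v) (hv0 : 0 ≤ v 0)
    (f f' : ℝ → ℝ) (hcont : ContinuousOn f (Ici (v 0)))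
    (hder : ∀ x, v 0 < x → HasDerivAt f (f' x) x)
    (hz : ∀ i, f (v i) = 0)
    (hlim : Tendsto f atTop (𝓝 0))
    (hpos : ∃ x, v (Fin.last m) < x ∧ 0 < f x) :
    ∃ c : Fin (m+1) → ℝ, StrictMono c ∧ (∀ i, 0 < c i) ∧ (∀ i, f' (c i) = 0) := by
  have hvi0 : ∀ i, v 0 ≤ v i := fun i => hv.monotone (Fin.zero_le i)
  have H : ∀ i : Fin (m+1), ∃ x, v i < x ∧
      (∀ h : i.val < m, x < v ⟨i.val+1, by omega⟩) ∧ f' x = 0 := by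
    intro i
    by_cases h : i.val < m
    · have hlt : v i < v ⟨i.val+1, by omega⟩ := hv (by simp [Fin.lt_def])
      obtain ⟨x, hx, hx'⟩ := exists_hasDerivAt_eq_zero hlt
        (hcont.mono (Icc_subset_Ici_self.trans (Ici_subset_Ici.mpr (hvi0 i))))
        (by rw [hz, hz])
        (fun y hy => hder y (lt_of_le_of_lt (hvi0 i) hy.1))
      exact ⟨x, hx.1, fun _ => hx.2, hx'⟩
    · have hi : i = Fin.last m := by
        apply Fin.ext; simp only [Fin.val_last]; omega
      obtain ⟨x₀, hx₀, hfx₀⟩ := hpos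
      obtain ⟨x, hx, hx'⟩ := exists_deriv_zero_Ioi f f' (v i) x₀ (hi ▸ hx₀)
        (hcont.mono (Ici_subset_Ici.mpr (hvi0 i)))
        (fun y hy => hder y (lt_of_le_of_lt (hvi0 i) hy))
        (hz i) hfx₀ hlim
      exact ⟨x, hx, fun h' => absurd h' h, hx'⟩
  choose c hc1 hc2 hc3 using H
  refine ⟨c, ?_, fun i => lt_of_le_of_lt (hv0.trans (hvi0 i)) (hc1 i), hc3⟩
  rw [Fin.strictMono_iff_lt_succ]
  intro i
  have h1 := hc2 i.castSucc (by simpa using i.is_lt)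
  have h2 : (⟨i.castSucc.val + 1, by exact Nat.succ_lt_succ (by simpa using i.is_lt)⟩ : Fin (m+1)) = i.succ := by
    apply Fin.ext; simp
  exact lt_trans (h2 ▸ h1) (hc1 i.succ)

-- monicity/degree of G = X*p - C c*p - X*p'
lemma monic_G (p : Polynomial ℝ) (hp : p.Monic) (k : ℕ) (hk : p.natDegree = k) (c : ℝ) :
    (X * p - C c * p - X * derivative p).Monic ∧
    (X * p - C c * p - X * derivative p).natDegree = k + 1 := by
  have hXp : (X * p).Monic := monic_X.mul hp
  have hXpd : (X * p).natDegree = k + 1 := by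
    rw [natDegree_mul X_ne_zero hp.ne_zero, natDegree_X, hk]; omega
  set r : Polynomial ℝ := -(C c * p + X * derivative p) with hr
  have key : X * p - C c * p - X * derivative p = X * p + r := by rw [hr]; ring
  have h1 : r.natDegree ≤ k := by
    rw [hr, natDegree_neg]
    apply le_trans (natDegree_add_le _ _)
    apply max_le
    · exact le_trans (natDegree_mul_le) (by simp [natDegree_C, hk])
    · rcases Nat.eq_zero_or_pos k with h0 | h0
      · have : p.derivative = 0 := by
          have := Polynomial.eq_C_of_natDegree_eq_zero (hk.trans h0)
          rw [this, derivative_C]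
        simp [this]
      · apply le_trans (natDegree_mul_le)
        have := natDegree_derivative_le p
        rw [natDegree_X, hk] at *
        omega
  have hrd : r.degree < (X * p).degree := by
    rcases eq_or_ne r 0 with h0 | h0
    · rw [h0, degree_zero]
      exact bot_lt_iff_ne_bot.mpr (by simp [degree_eq_natDegree hXp.ne_zero])
    · rw [degree_eq_natDegree h0, degree_eq_natDegree hXp.ne_zero, hXpd]
      exact_mod_cast lt_of_le_of_lt h1 (Nat.lt_succ_self k)
  constructor
  · rw [key]; exact hXp.add_of_left hrd
  · rw [key, natDegree_add_eq_left_of_degree_lt hrd, hXpd]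

lemma monic_sub_derivative (p : Polynomial ℝ) (hp : p.Monic) (k : ℕ) (hk : p.natDegree = k)
    (hk0 : 0 < k) :
    (p - derivative p).Monic ∧ (p - derivative p).natDegree = k := by
  have key : p - derivative p = p + -derivative p := by ring
  have hrd : (-derivative p).degree < p.degree := by
    rcases eq_or_ne (derivative p) 0 with h0 | h0
    · rw [h0, neg_zero, degree_zero]
      exact bot_lt_iff_ne_bot.mpr (by simp [degree_eq_natDegree hp.ne_zero])
    · rw [degree_neg, degree_eq_natDegree h0, degree_eq_natDegree hp.ne_zero, hk]
      have := natDegree_derivative_le p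
      rw [hk] at this
      exact_mod_cast by omega
  constructor
  · rw [key]; exact hp.add_of_left hrd
  · rw [key, natDegree_add_eq_left_of_degree_lt hrd, hk]
section Critical
open Polynomial Set Filter Topology

lemma exists_critical (k : ℕ) (t : Fin k → ℝ)
    (c : ℝ) (hc : 0 ≤ c) (m : ℕ) (v : Fin (m+1) → ℝ) (hv : StrictMono v) (hv0 : 0 ≤ v 0)
    (hvc : 0 < v 0 ∨ 0 < c)
    (hz : ∀ i, (v i) ^ c * Real.exp (-(v i)) * (∏ j, (X - C (t j)) : Polynomial ℝ).eval (v i) = 0)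
    (hlast : ∀ j, t j < v (Fin.last m) + 1) :
    ∃ r : Fin (m+1) → ℝ, StrictMono r ∧ (∀ i, 0 < r i) ∧
      ∀ i, (X * (∏ j, (X - C (t j))) - C c * (∏ j, (X - C (t j)))
            - X * derivative (∏ j, (X - C (t j))) : Polynomial ℝ).eval (r i) = 0 := by
  set p : Polynomial ℝ := ∏ j, (X - C (t j)) with hp
  set G : Polynomial ℝ := X * p - C c * p - X * derivative p with hG
  set f : ℝ → ℝ := fun x => x ^ c * Real.exp (-x) * p.eval x with hf
  set f' : ℝ → ℝ := fun x => -(x ^ (c-1) * Real.exp (-x) * G.eval x) with hf'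
  have hcont : ContinuousOn f (Ici (v 0)) := by
    apply ContinuousOn.mul
    apply ContinuousOn.mul
    · intro x hx
      exact (Real.continuousAt_rpow_const x c (Or.inr hc)).continuousWithinAt
    · exact ((Real.continuous_exp.comp continuous_neg).continuousOn)
    · exact p.continuous.continuousOn
  have hder : ∀ x, v 0 < x → HasDerivAt f (f' x) x := by
    intro x hx
    exact hasDerivAt_F p c x (lt_of_le_of_lt hv0 hx)
  have hlim : Tendsto f atTop (𝓝 0) := tendsto_F p c
  have hpos : ∃ x, v (Fin.last m) < x ∧ 0 < f x := by
    refine ⟨v (Fin.last m) + 1, lt_add_one _, ?_⟩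
    have hx0 : (0:ℝ) < v (Fin.last m) + 1 :=
      lt_of_le_of_lt (hv0.trans (hv.monotone (Fin.zero_le _))) (lt_add_one _)
    apply mul_pos (mul_pos (Real.rpow_pos_of_pos hx0 c) (Real.exp_pos _))
    rw [hp, eval_prod]
    apply Finset.prod_pos
    intro j _
    simp only [eval_sub, eval_X, eval_C]
    linarith [hlast j]
  obtain ⟨r, hr1, hr2, hr3⟩ := chain m v hv hv0 f f' hcont hder hz hlim hpos
  refine ⟨r, hr1, hr2, fun i => ?_⟩
  have := hr3 i
  rw [hf'] at this
  simp only [neg_eq_zero] at this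
  rcases mul_eq_zero.mp this with h | h
  · rcases mul_eq_zero.mp h with h' | h'
    · exact absurd h' (ne_of_gt (Real.rpow_pos_of_pos (hr2 i) _))
    · exact absurd h' (Real.exp_ne_zero _)
  · exact h

end Critical
section Algebra
open Polynomial

private lemma hC3 : C (1/3:ℝ) * C ((3:ℕ):ℝ) = 1 := by rw [← C_mul]; norm_num
private lemma hC2 : C ((2:ℕ):ℝ) * C (1/3:ℝ) = C (2/3:ℝ) := by rw [← C_mul]; norm_num
private lemma hC1 : C ((1:ℕ):ℝ) = 1 := by norm_num

lemma alg0 (p : Polynomial ℝ) :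
    X^2 * (X^0 * p.comp (X^3)) - C (1/3:ℝ) * derivative (X^0 * p.comp (X^3))
      = X^2 * ((p - derivative p).comp (X^3)) := by
  simp only [derivative_mul, derivative_comp, derivative_X_pow, sub_comp, mul_comp,
    X_comp, C_comp, pow_zero, one_mul, derivative_one, zero_mul, zero_add]
  linear_combination (-(X^2 * (derivative p).comp (X^3))) * hC3

lemma alg2 (p : Polynomial ℝ) :
    X^2 * (X^2 * p.comp (X^3)) - C (1/3:ℝ) * derivative (X^2 * p.comp (X^3))
      = X^1 * ((X * p - C (2/3:ℝ) * p - X * derivative p).comp (X^3)) := by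
  simp only [derivative_mul, derivative_comp, derivative_X_pow, sub_comp, mul_comp,
    X_comp, C_comp, pow_zero, one_mul, derivative_one, zero_mul, zero_add]
  linear_combination (-(X * p.comp (X^3))) * hC2
    - X^4 * (derivative p).comp (X^3) * hC3

lemma alg1 (p : Polynomial ℝ) :
    X^2 * (X^1 * p.comp (X^3)) - C (1/3:ℝ) * derivative (X^1 * p.comp (X^3))
      = X^0 * ((X * p - C (1/3:ℝ) * p - X * derivative p).comp (X^3)) := by
  simp only [derivative_mul, derivative_comp, derivative_X_pow, sub_comp, mul_comp,
    X_comp, C_comp, pow_zero, one_mul, derivative_one, zero_mul, zero_add]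
  linear_combination (-(C (1/3:ℝ) * p.comp (X^3))) * hC1
    - X^3 * (derivative p).comp (X^3) * hC3

end Algebra
section Key
open Polynomial Set Filter Topology

lemma cons_strictMono {k : ℕ} (t : Fin k → ℝ) (ht : StrictMono t) (h0 : ∀ i, 0 < t i) :
    StrictMono (Fin.cons 0 t : Fin (k+1) → ℝ) := by
  rw [Fin.strictMono_iff_lt_succ]
  intro i
  rw [Fin.cons_succ]
  by_cases hi : i.castSucc = 0
  · rw [hi, Fin.cons_zero]; exact h0 i
  · obtain ⟨j, hj⟩ := Fin.eq_succ_of_ne_zero hi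
    rw [hj, Fin.cons_succ]
    apply ht
    rw [Fin.lt_def]
    have hval : j.val + 1 = i.val := by
      have := congrArg Fin.val hj
      simpa using this.symm
    omega

lemma key (n : ℕ) : ∃ (k : ℕ) (t : Fin k → ℝ), k = N n ∧ StrictMono t ∧ (∀ i, 0 < t i) ∧
    Qr n = X ^ (2*n % 3) * (∏ i, (X - C (t i))).comp (X^3) := by
  induction n with
  | zero =>
    refine ⟨0, Fin.elim0, by simp [N], fun i => i.elim0, fun i => i.elim0, ?_⟩
    simp [Qr]
  | succ n ih =>
    obtain ⟨k, t, hkN, ht, htpos, hQ⟩ := ih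
    set p : Polynomial ℝ := ∏ i, (X - C (t i)) with hpdef
    have hpm : p.Monic := monic_prod_of_monic _ _ (fun i _ => monic_X_sub_C _)
    have hpd : p.natDegree = k := by
      rw [hpdef, natDegree_prod_of_monic _ _ (fun i _ => monic_X_sub_C _)]; simp
    have hQsucc : Qr (n+1) = X^2 * Qr n - C (1/3:ℝ) * (Qr n).derivative := rfl
    have hproot : ∀ i, p.eval (t i) = 0 := by
      intro i
      rw [hpdef, eval_prod]
      apply Finset.prod_eq_zero (Finset.mem_univ i)
      simp
    have hmod : n % 3 = 0 ∨ n % 3 = 1 ∨ n % 3 = 2 := by omega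
    rcases hmod with h3 | h3 | h3
    · -- case n ≡ 0: a = 0, c = 0
      have ha : 2*n % 3 = 0 := by omega
      have ha' : 2*(n+1) % 3 = 2 := by omega
      have hkn : k = 2*n/3 := by simpa [N, h3] using hkN
      rcases Nat.eq_zero_or_pos k with hk0 | hk0
      · -- then n = 0
        have hn0 : n = 0 := by omega
        subst hn0
        refine ⟨0, Fin.elim0, by simp [N], fun i => i.elim0, fun i => i.elim0, ?_⟩
        have h1 : Qr 1 = X^2 := by
          have : Qr 0 = 1 := rfl
          rw [hQsucc, this]
          simp
        rw [h1]
        norm_num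
      · obtain ⟨m, rfl⟩ : ∃ m, k = m+1 := ⟨k-1, by omega⟩
        have hz : ∀ i, (t i) ^ (0:ℝ) * Real.exp (-(t i)) * p.eval (t i) = 0 := by
          intro i; rw [hproot i, mul_zero]
        have hlast : ∀ j, t j < t (Fin.last m) + 1 := by
          intro j
          have := ht.monotone (Fin.le_last j)
          linarith
        obtain ⟨r, hr, hrpos, hroot⟩ := exists_critical (m+1) t 0 le_rfl m t ht
          (htpos 0).le (Or.inl (htpos 0)) hz hlast
        have hmonic := monic_sub_derivative p hpm (m+1) hpd (by omega)
        have hroot' : ∀ i, (p - derivative p).eval (r i) = 0 := by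
          intro i
          have h := hroot i
          simp only [map_zero, zero_mul, sub_zero, eval_sub, eval_mul, eval_X] at h ⊢
          have h2 : r i * (p.eval (r i) - (derivative p).eval (r i)) = 0 := by
            rw [mul_sub]; linarith [h]
          rcases mul_eq_zero.mp h2 with h' | h'
          · exact absurd h' (ne_of_gt (hrpos i))
          · exact h'
        have hfact : p - derivative p = ∏ i, (X - C (r i)) :=
          eq_prod_of_roots _ hmonic.1 hmonic.2 r hr.injective hroot'
        refine ⟨m+1, r, ?_, hr, hrpos, ?_⟩
        · have h1 : (n+1) % 3 = 1 := by omega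
          simp only [N, h1]
          norm_num
          omega
        · rw [hQsucc, hQ, ha, ha', alg0 p, hfact]
    · -- case n ≡ 1: a = 2, c = 2/3
      have ha : 2*n % 3 = 2 := by omega
      have ha' : 2*(n+1) % 3 = 1 := by omega
      have hkn : k = 2*(n-1)/3 := by simpa [N, h3] using hkN
      set v : Fin (k+1) → ℝ := Fin.cons 0 t with hvdef
      have hv : StrictMono v := cons_strictMono t ht htpos
      have hz : ∀ i, (v i) ^ (2/3:ℝ) * Real.exp (-(v i)) * p.eval (v i) = 0 := by
        intro i
        induction i using Fin.cases with
        | zero =>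
          rw [hvdef]
          simp [Real.zero_rpow (by norm_num : (2/3:ℝ) ≠ 0)]
        | succ j =>
          rw [hvdef, Fin.cons_succ, hproot j, mul_zero]
      have hlast : ∀ j, t j < v (Fin.last k) + 1 := by
        intro j
        have h1 : t j = v j.succ := by rw [hvdef, Fin.cons_succ]
        have h2 : v j.succ ≤ v (Fin.last k) := hv.monotone (Fin.le_last _)
        linarith
      obtain ⟨r, hr, hrpos, hroot⟩ := exists_critical k t (2/3) (by norm_num) k v hv
        (by rw [hvdef]; simp) (Or.inr (by norm_num)) hz hlast
      have hmonic := monic_G p hpm k hpd (2/3)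
      have hfact : X * p - C (2/3:ℝ) * p - X * derivative p = ∏ i, (X - C (r i)) :=
        eq_prod_of_roots _ hmonic.1 hmonic.2 r hr.injective hroot
      refine ⟨k+1, r, ?_, hr, hrpos, ?_⟩
      · have h1 : (n+1) % 3 = 2 := by omega
        simp only [N, h1]
        norm_num
        omega
      · rw [hQsucc, hQ, ha, ha', alg2 p, hfact]
    · -- case n ≡ 2: a = 1, c = 1/3
      have ha : 2*n % 3 = 1 := by omega
      have ha' : 2*(n+1) % 3 = 0 := by omega
      have hkn : k = 2*(n-2)/3 + 1 := by simpa [N, h3] using hkN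
      set v : Fin (k+1) → ℝ := Fin.cons 0 t with hvdef
      have hv : StrictMono v := cons_strictMono t ht htpos
      have hz : ∀ i, (v i) ^ (1/3:ℝ) * Real.exp (-(v i)) * p.eval (v i) = 0 := by
        intro i
        induction i using Fin.cases with
        | zero =>
          rw [hvdef]
          simp [Real.zero_rpow (by norm_num : (1/3:ℝ) ≠ 0)]
        | succ j =>
          rw [hvdef, Fin.cons_succ, hproot j, mul_zero]
      have hlast : ∀ j, t j < v (Fin.last k) + 1 := by
        intro j
        have h1 : t j = v j.succ := by rw [hvdef, Fin.cons_succ]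
        have h2 : v j.succ ≤ v (Fin.last k) := hv.monotone (Fin.le_last _)
        linarith
      obtain ⟨r, hr, hrpos, hroot⟩ := exists_critical k t (1/3) (by norm_num) k v hv
        (by rw [hvdef]; simp) (Or.inr (by norm_num)) hz hlast
      have hmonic := monic_G p hpm k hpd (1/3)
      have hfact : X * p - C (1/3:ℝ) * p - X * derivative p = ∏ i, (X - C (r i)) :=
        eq_prod_of_roots _ hmonic.1 hmonic.2 r hr.injective hroot
      refine ⟨k+1, r, ?_, hr, hrpos, ?_⟩
      · have h1 : (n+1) % 3 = 0 := by omega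
        simp only [N, h1]
        norm_num
        omega
      · rw [hQsucc, hQ, ha, ha', alg1 p, hfact]

end Key
section Final
open Polynomial Set Filter Topology

lemma cube_root_pow {x : ℝ} (hx : 0 ≤ x) : (x ^ (3:ℕ)) ^ ((1:ℝ)/3) = x := by
  rw [← Real.rpow_natCast x 3, ← Real.rpow_mul hx]
  norm_num

lemma pow_cube_root {x : ℝ} (hx : 0 ≤ x) : (x ^ ((1:ℝ)/3)) ^ (3:ℕ) = x := by
  rw [← Real.rpow_natCast _ 3, ← Real.rpow_mul hx]
  norm_num

/-- `Pₙ` has exactly `N n` zeros in `(0,∞)`, all simple;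
`x = 0` is not a zero when `n ≡ 0 (mod 3)`, a zero of multiplicity exactly `2`
when `n ≡ 1 (mod 3)`, and of multiplicity exactly `1` when `n ≡ 2 (mod 3)`.
Here `q` is the polynomial whose evaluation is the entire function `Pₙ`. -/
theorem stmt13 (n : ℕ) (q : Polynomial ℂ) (hq : ∀ x : ℂ, q.eval x = P n x) :
    {x : ℝ | 0 < x ∧ P n (x : ℂ) = 0}.ncard = N n ∧
    (∀ x : ℝ, 0 < x → P n (x : ℂ) = 0 → q.rootMultiplicity (x : ℂ) = 1) ∧
    (n % 3 = 0 → P n 0 ≠ 0) ∧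
    (n % 3 = 1 → q.rootMultiplicity 0 = 2) ∧
    (n % 3 = 2 → q.rootMultiplicity 0 = 1) := by
  obtain ⟨k, t, hkN, ht, htpos, hQ⟩ := key n
  set a : ℕ := 2*n % 3 with hadef
  -- complex factorization
  have hQC : Qc n = X ^ a * ∏ i, ((X:Polynomial ℂ)^3 - C ((t i : ℂ))) := by
    rw [Qc, hQ]
    rw [Polynomial.map_mul, Polynomial.map_pow, map_X, map_comp, Polynomial.map_prod,
      Polynomial.map_pow, map_X, prod_comp]
    congr 1
    apply Finset.prod_congr rfl
    intro i _
    rw [Polynomial.map_sub, map_X, map_C, sub_comp, X_comp, C_comp]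
    rfl
  have hfactors_ne : ∀ i : Fin k, ((X:Polynomial ℂ)^3 - C ((t i : ℂ))) ≠ 0 :=
    fun i => (monic_X_pow_sub_C _ (by norm_num : (3:ℕ) ≠ 0)).ne_zero
  have hQC_ne : Qc n ≠ 0 := by
    rw [hQC]
    exact mul_ne_zero (pow_ne_zero _ X_ne_zero)
      (Finset.prod_ne_zero_iff.mpr (fun i _ => hfactors_ne i))
  -- P on reals
  have hPr : ∀ x : ℝ, P n (x : ℂ) = (((Qr n).eval x : ℝ) : ℂ) := by
    intro x
    rw [P_eq_eval, Qc, Polynomial.eval_map]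
    exact Polynomial.eval₂_at_apply (algebraMap ℝ ℂ) x
  have hPrz : ∀ x : ℝ, (P n (x : ℂ) = 0 ↔ (Qr n).eval x = 0) := by
    intro x
    rw [hPr x]
    exact_mod_cast Complex.ofReal_eq_zero
  have hevalQr : ∀ x : ℝ, (Qr n).eval x = x ^ a * ∏ i, (x^3 - t i) := by
    intro x
    rw [hQ, eval_mul, eval_pow, eval_X, eval_comp, eval_pow, eval_X, eval_prod]
    simp
  -- zero set description
  have hset : {x : ℝ | 0 < x ∧ P n (x : ℂ) = 0} = Set.range (fun i => (t i) ^ ((1:ℝ)/3)) := by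
    ext x
    simp only [mem_setOf_eq, Set.mem_range]
    constructor
    · rintro ⟨hx, hz⟩
      rw [hPrz, hevalQr] at hz
      rcases mul_eq_zero.mp hz with h | h
      · exact absurd h (pow_ne_zero _ hx.ne')
      · obtain ⟨i, _, hi⟩ := Finset.prod_eq_zero_iff.mp h
        refine ⟨i, ?_⟩
        have hx3 : x ^ (3:ℕ) = t i := by linarith [sub_eq_zero.mp hi]
        rw [← hx3, cube_root_pow hx.le]
    · rintro ⟨i, rfl⟩
      have hpos : 0 < (t i) ^ ((1:ℝ)/3) := Real.rpow_pos_of_pos (htpos i) _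
      refine ⟨hpos, ?_⟩
      rw [hPrz, hevalQr]
      have h3 : ((t i) ^ ((1:ℝ)/3)) ^ (3:ℕ) = t i := by
        rw [← Real.rpow_natCast _ 3, ← Real.rpow_mul (htpos i).le]
        norm_num
      apply mul_eq_zero_of_right
      apply Finset.prod_eq_zero (Finset.mem_univ i)
      rw [h3, sub_self]
  have hcard : {x : ℝ | 0 < x ∧ P n (x : ℂ) = 0}.ncard = N n := by
    rw [hset, ← Set.image_univ, Set.ncard_image_of_injective]
    · rw [Set.ncard_univ, Nat.card_eq_fintype_card, Fintype.card_fin, hkN]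
    · intro i j hij
      simp only at hij
      apply ht.injective
      calc t i = ((t i) ^ ((1:ℝ)/3)) ^ (3:ℕ) := (pow_cube_root (htpos i).le).symm
        _ = ((t j) ^ ((1:ℝ)/3)) ^ (3:ℕ) := by rw [hij]
        _ = t j := pow_cube_root (htpos j).le
  -- q is Qc n
  have hqQc : q = Qc n := Polynomial.funext (fun z => by rw [hq z, P_eq_eval])
  have hprod_ne : Qc n ≠ 0 := hQC_ne
  have hmul_ne : (X ^ a * ∏ i, ((X:Polynomial ℂ)^3 - C ((t i : ℂ)))) ≠ 0 := hQC ▸ hQC_ne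
  have rmXpow : ∀ b : ℕ, rootMultiplicity (0:ℂ) (X^b) = b := by
    intro b
    have := Polynomial.rootMultiplicity_X_sub_C_pow (0:ℂ) b
    simpa using this
  have rm0_factor : ∀ i : Fin k, rootMultiplicity (0:ℂ) ((X:Polynomial ℂ)^3 - C ((t i : ℂ))) = 0 := by
    intro i
    apply rootMultiplicity_eq_zero
    simp only [IsRoot, eval_sub, eval_pow, eval_X, eval_C]
    intro h
    have : ((t i : ℂ)) = 0 := by
      have := sub_eq_zero.mp h
      simp [← this]
    exact (Complex.ofReal_ne_zero.mpr (htpos i).ne') this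
  refine ⟨hcard, ?_, ?_, ?_, ?_⟩
  · -- simple positive roots
    intro x hx hz
    have hz' := (hPrz x).mp hz
    rw [hevalQr] at hz'
    rcases mul_eq_zero.mp hz' with h | h
    · exact absurd h (pow_ne_zero _ hx.ne')
    · obtain ⟨i₀, _, hi₀⟩ := Finset.prod_eq_zero_iff.mp h
      have hx3 : x ^ (3:ℕ) = t i₀ := by linarith [sub_eq_zero.mp hi₀]
      rw [hqQc, hQC, Polynomial.rootMultiplicity_mul hmul_ne,
        rootMultiplicity_prod Finset.univ _ (fun i _ => hfactors_ne i)]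
      have h1 : rootMultiplicity ((x:ℂ)) ((X:Polynomial ℂ)^a) = 0 := by
        apply rootMultiplicity_eq_zero
        simp only [IsRoot, eval_pow, eval_X]
        exact pow_ne_zero _ (Complex.ofReal_ne_zero.mpr hx.ne')
      rw [h1, zero_add]
      rw [Finset.sum_eq_single_of_mem i₀ (Finset.mem_univ i₀)]
      · -- multiplicity 1 at i₀
        have hti : ((t i₀ : ℂ)) = (x:ℂ)^3 := by
          rw [← hx3]; push_cast; ring
        have hfact : ((X:Polynomial ℂ)^3 - C ((t i₀ : ℂ)))
            = (X - C (x:ℂ)) * (X^2 + C (x:ℂ) * X + C ((x:ℂ))^2) := by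
          rw [hti]
          have : C ((x:ℂ)^3) = (C ((x:ℂ)))^3 := by rw [map_pow]
          rw [this]; ring
        have hquad_ne : ((X:Polynomial ℂ)^2 + C (x:ℂ) * X + C ((x:ℂ))^2) ≠ 0 := by
          intro hc
          have := congrArg (eval 0) hc
          simp only [eval_add, eval_mul, eval_pow, eval_X, eval_C, eval_zero] at this
          have hx2 : ((x:ℂ))^2 ≠ 0 := pow_ne_zero _ (Complex.ofReal_ne_zero.mpr hx.ne')
          apply hx2
          rw [← this]; ring
        rw [hfact, Polynomial.rootMultiplicity_mul (mul_ne_zero (X_sub_C_ne_zero _) hquad_ne),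
          Polynomial.rootMultiplicity_X_sub_C_self]
        have h2 : rootMultiplicity ((x:ℂ)) ((X:Polynomial ℂ)^2 + C (x:ℂ) * X + C ((x:ℂ))^2) = 0 := by
          apply rootMultiplicity_eq_zero
          simp only [IsRoot, eval_add, eval_mul, eval_pow, eval_X, eval_C]
          intro hc
          have h3 : (3:ℂ) * ((x:ℂ))^2 = 0 := by rw [← hc]; ring
          rcases mul_eq_zero.mp h3 with h' | h'
          · norm_num at h'
          · exact pow_ne_zero _ (Complex.ofReal_ne_zero.mpr hx.ne') h'
        rw [h2]
      · -- other factors have multiplicity 0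
        intro i _ hi
        apply rootMultiplicity_eq_zero
        simp only [IsRoot, eval_sub, eval_pow, eval_X, eval_C]
        intro hc
        apply hi
        apply ht.injective
        have : (((x:ℝ)^(3:ℕ) : ℝ) : ℂ) = ((t i : ℝ) : ℂ) := by
          push_cast
          rw [← sub_eq_zero]
          linear_combination hc
        have hre : x ^ (3:ℕ) = t i := Complex.ofReal_injective this
        rw [← hre, hx3]
  · -- n % 3 = 0 : P n 0 ≠ 0
    intro h3
    have ha0 : a = 0 := by omega
    rw [P_eq_eval, hQC, ha0]
    simp only [pow_zero, one_mul, eval_prod, eval_sub, eval_pow, eval_X, eval_C]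
    apply Finset.prod_ne_zero_iff.mpr
    intro i _
    simp only [zero_pow, ne_eq, OfNat.ofNat_ne_zero, not_false_eq_true, zero_sub, neg_eq_zero]
    exact Complex.ofReal_ne_zero.mpr (htpos i).ne'
  · -- n % 3 = 1 : multiplicity 2 at 0
    intro h3
    have ha2 : a = 2 := by omega
    rw [hqQc, hQC, Polynomial.rootMultiplicity_mul hmul_ne,
      rootMultiplicity_prod Finset.univ _ (fun i _ => hfactors_ne i), ha2, rmXpow]
    rw [Finset.sum_eq_zero (fun i _ => rm0_factor i)]
    norm_num
  · -- n % 3 = 2 : multiplicity 1 at 0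
    intro h3
    have ha1 : a = 1 := by omega
    rw [hqQc, hQC, Polynomial.rootMultiplicity_mul hmul_ne,
      rootMultiplicity_prod Finset.univ _ (fun i _ => hfactors_ne i), ha1, rmXpow]
    rw [Finset.sum_eq_zero (fun i _ => rm0_factor i)]
    norm_num

end Final
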